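/- Robbins–Siegmund-type almost sure convergence under a contraction drift: Let (Ω, F, μ) be a probability space with a filtration (F_t)_{t ∈ ℕ}, and let (V_t)_{t ∈ ℕ} be a sequence of nonnegative, integrable random variables with V_t measurable with respect to F_t. Let (η_t)_{t ∈ ℕ} be real numbers with 0 ≤ η_t ≤ 1, Σ_t η_t = ∞ and Σ_t η_t² < ∞, and let c > 0, C ≥ 0 be constants. Suppose that for every t, E[V_{t+1} | F_t] ≤ (1 − c·η_t)·V_t + C·η_t² almost surely. Then V_t → 0 almost surely as t → ∞. -/

import Mathlib

open MeasureTheory Filter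

set_option maxHeartbeats 2000000 in
/-- **Robbins–Siegmund-type almost sure convergence under a contraction drift.**
If `(V_t)` are nonnegative integrable random variables adapted to a filtration
`(ℱ_t)`, step sizes `η_t ∈ [0,1]` satisfy `∑ η_t = ∞` and `∑ η_t² < ∞`, and
`E[V_{t+1} | ℱ_t] ≤ (1 − c η_t) V_t + C η_t²` a.s. for constants `c > 0`, `C ≥ 0`,
then `V_t → 0` almost surely. -/
theorem robbins_siegmund_contraction {Ω : Type*} {m : MeasurableSpace Ω}
    (μ : Measure Ω) [IsProbabilityMeasure μ]
    (ℱ : Filtration ℕ m)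
    (V : ℕ → Ω → ℝ)
    (hVnn : ∀ t ω, 0 ≤ V t ω)
    (hVint : ∀ t, Integrable (V t) μ)
    (hVadapted : ∀ t, Measurable[ℱ t] (V t))
    (η : ℕ → ℝ) (hη0 : ∀ t, 0 ≤ η t) (hη1 : ∀ t, η t ≤ 1)
    (hηdiv : Tendsto (fun n => ∑ t ∈ Finset.range n, η t) atTop atTop)
    (hηsq : Summable (fun t => (η t) ^ 2))
    (c C : ℝ) (hc : 0 < c) (hC : 0 ≤ C)
    (hdrift : ∀ t, ∀ᵐ ω ∂μ,
      (μ[V (t + 1) | ℱ t]) ω ≤ (1 - c * η t) * V t ω + C * (η t) ^ 2) :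
    ∀ᵐ ω ∂μ, Tendsto (fun t => V t ω) atTop (nhds 0) := by
  -- tail sums of η²
  set r : ℕ → ℝ := fun t => ∑' s, η (s + t) ^ 2 with hrdef
  have hηsq' : ∀ t, Summable (fun s => η (s + t) ^ 2) := fun t =>
    (summable_nat_add_iff t).2 hηsq
  have hrnn : ∀ t, 0 ≤ r t := fun t => tsum_nonneg fun s => sq_nonneg _
  have hrrec : ∀ t, r t = η t ^ 2 + r (t + 1) := by
    intro t
    have h := Summable.tsum_eq_zero_add (hηsq' t)
    simp only [zero_add] at h
    rw [hrdef]
    simp only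
    rw [h]
    congr 1
    exact tsum_congr fun s => by ring_nf
  -- the supermartingale W
  set W : ℕ → Ω → ℝ := fun t ω => V t ω + C * r t with hWdef
  have hWint : ∀ t, Integrable (W t) μ := fun t => (hVint t).add (integrable_const _)
  have hWsuper : Supermartingale W ℱ μ := by
    refine supermartingale_nat (fun t => ((hVadapted t).stronglyMeasurable).add
      stronglyMeasurable_const) hWint (fun t => ?_)
    have hce : μ[W (t + 1)|ℱ t] =ᵐ[μ] fun ω => (μ[V (t + 1)|ℱ t]) ω + C * r (t + 1) := by
      have h1 : μ[W (t + 1)|ℱ t]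
          =ᵐ[μ] μ[V (t + 1)|ℱ t] + μ[(fun _ => C * r (t + 1))|ℱ t] :=
        condExp_add (hVint (t + 1)) (integrable_const _) (ℱ t)
      refine h1.trans ?_
      rw [condExp_const (ℱ.le t)]
      rfl
    filter_upwards [hce, hdrift t] with ω h1 h2
    rw [hWdef]
    simp only
    rw [h1]
    have h3 : 0 ≤ c * η t * V t ω := mul_nonneg (mul_nonneg hc.le (hη0 t)) (hVnn t ω)
    have h4 := hrrec t
    nlinarith
  -- L¹ bound for W
  have hWnn : ∀ t ω, 0 ≤ W t ω := fun t ω =>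
    add_nonneg (hVnn t ω) (mul_nonneg hC (hrnn t))
  have heLp : ∀ n, eLpNorm (W n) 1 μ = ENNReal.ofReal (∫ ω, W n ω ∂μ) := by
    intro n
    rw [ofReal_integral_eq_lintegral_ofReal (hWint n) (Filter.Eventually.of_forall (hWnn n)),
      eLpNorm_one_eq_lintegral_enorm]
    congr 1
    ext ω
    rw [Real.enorm_of_nonneg (hWnn n ω)]
  have hbdd : ∀ n, eLpNorm ((-W) n) 1 μ ≤ ENNReal.ofReal (∫ ω, W 0 ω ∂μ) := by
    intro n
    have h1 : (-W) n = -(W n) := rfl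
    rw [h1, eLpNorm_neg, heLp n]
    refine ENNReal.ofReal_le_ofReal ?_
    have := hWsuper.setIntegral_le (Nat.zero_le n) (MeasurableSet.univ)
    simpa [setIntegral_univ] using this
  have hconv : ∀ᵐ ω ∂μ, ∃ l, Tendsto (fun n => (-W) n ω) atTop (nhds l) :=
    hWsuper.neg.exists_ae_tendsto_of_bdd hbdd
  -- expectation recursion
  have hInn : ∀ t, 0 ≤ ∫ ω, V t ω ∂μ := fun t => integral_nonneg (fun ω => hVnn t ω)
  have hI : ∀ t, ∫ ω, V (t + 1) ω ∂μ ≤ (1 - c * η t) * ∫ ω, V t ω ∂μ + C * η t ^ 2 := by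
    intro t
    have h1 : ∫ ω, V (t + 1) ω ∂μ = ∫ ω, (μ[V (t + 1)|ℱ t]) ω ∂μ :=
      (integral_condExp (ℱ.le t)).symm
    rw [h1]
    have h2 : ∫ ω, (μ[V (t + 1)|ℱ t]) ω ∂μ
        ≤ ∫ ω, ((1 - c * η t) * V t ω + C * η t ^ 2) ∂μ :=
      integral_mono_ae integrable_condExp (((hVint t).const_mul _).add (integrable_const _))
        (hdrift t)
    refine h2.trans_eq ?_
    rw [integral_add ((hVint t).const_mul _) (integrable_const _), integral_const_mul,
      integral_const]
    simp
  have key : ∀ n, ∑ t ∈ Finset.range n, c * (η t * ∫ ω, V t ω ∂μ) + ∫ ω, V n ω ∂μ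
      ≤ ∫ ω, V 0 ω ∂μ + C * ∑ t ∈ Finset.range n, η t ^ 2 := by
    intro n
    induction n with
    | zero => simp
    | succ n ih =>
      rw [Finset.sum_range_succ, Finset.sum_range_succ]
      have := hI n
      nlinarith [this, ih]
  have hsumI : Summable (fun t => η t * ∫ ω, V t ω ∂μ) := by
    refine summable_of_sum_range_le (c := (∫ ω, V 0 ω ∂μ + C * ∑' t, η t ^ 2) / c)
      (fun t => mul_nonneg (hη0 t) (hInn t)) (fun n => ?_)
    rw [le_div_iff₀ hc]
    have h1 : ∑ t ∈ Finset.range n, η t ^ 2 ≤ ∑' t, η t ^ 2 :=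
      Summable.sum_le_tsum _ (fun i _ => sq_nonneg _) hηsq
    have h2 := key n
    have h3 := hInn n
    have h4 : C * ∑ t ∈ Finset.range n, η t ^ 2 ≤ C * ∑' t, η t ^ 2 :=
      mul_le_mul_of_nonneg_left h1 hC
    have h5 : (∑ t ∈ Finset.range n, η t * ∫ ω, V t ω ∂μ) * c
        = ∑ t ∈ Finset.range n, c * (η t * ∫ ω, V t ω ∂μ) := by
      rw [Finset.sum_mul]
      exact Finset.sum_congr rfl fun t _ => by ring
    rw [h5]
    linarith
  -- a.e. summability of η t * V t
  have hVmeas : ∀ t, Measurable (V t) := fun t => (hVadapted t).mono (ℱ.le t) le_rfl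
  have hae : ∀ᵐ ω ∂μ, Summable (fun t => η t * V t ω) := by
    have hmeas : ∀ t, Measurable (fun ω => ENNReal.ofReal (η t * V t ω)) := fun t =>
      ENNReal.measurable_ofReal.comp ((hVmeas t).const_mul _)
    have h1 : ∫⁻ ω, ∑' t, ENNReal.ofReal (η t * V t ω) ∂μ
        = ∑' t, ∫⁻ ω, ENNReal.ofReal (η t * V t ω) ∂μ :=
      lintegral_tsum fun t => (hmeas t).aemeasurable
    have h2 : ∀ t, ∫⁻ ω, ENNReal.ofReal (η t * V t ω) ∂μ
        = ENNReal.ofReal (η t * ∫ ω, V t ω ∂μ) := by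
      intro t
      rw [← ofReal_integral_eq_lintegral_ofReal ((hVint t).const_mul _)
          (Filter.Eventually.of_forall fun ω => mul_nonneg (hη0 t) (hVnn t ω)),
        integral_const_mul]
    have h3 : ∫⁻ ω, ∑' t, ENNReal.ofReal (η t * V t ω) ∂μ ≠ ⊤ := by
      rw [h1]
      simp_rw [h2]
      rw [← ENNReal.ofReal_tsum_of_nonneg (fun t => mul_nonneg (hη0 t) (hInn t)) hsumI]
      exact ENNReal.ofReal_ne_top
    filter_upwards [ae_lt_top (Measurable.ennreal_tsum hmeas) h3] with ω hω
    have h4 := ENNReal.summable_toReal hω.ne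
    refine h4.congr fun t => ?_
    rw [ENNReal.toReal_ofReal (mul_nonneg (hη0 t) (hVnn t ω))]
  -- conclusion
  filter_upwards [hconv, hae] with ω hc1 hc2
  obtain ⟨l, hl⟩ := hc1
  have hrlim : Tendsto (fun n => C * r n) atTop (nhds (C * 0)) :=
    (tendsto_sum_nat_add fun s => η s ^ 2).const_mul C
  rw [mul_zero] at hrlim
  have hWlim : Tendsto (fun n => W n ω) atTop (nhds (-l)) := by
    refine hl.neg.congr fun n => ?_
    show -(-(W n ω)) = W n ω
    ring
  have hVlim : Tendsto (fun n => V n ω) atTop (nhds (-l - 0)) := by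
    refine (hWlim.sub hrlim).congr fun n => ?_
    show V n ω + C * r n - C * r n = V n ω
    ring
  rw [sub_zero] at hVlim
  have hL0 : 0 ≤ -l := ge_of_tendsto hVlim (Filter.Eventually.of_forall fun n => hVnn n ω)
  rcases hL0.lt_or_eq with hLpos | hLeq
  · exfalso
    have hev : ∀ᶠ n in atTop, -l / 2 < V n ω :=
      hVlim.eventually (eventually_gt_nhds (half_lt_self hLpos))
    obtain ⟨N, hN⟩ := eventually_atTop.1 hev
    have hsumshift : Summable (fun n => η (n + N) * V (n + N) ω) :=
      (summable_nat_add_iff N).2 hc2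
    have hsumη : Summable (fun n => η (n + N)) := by
      refine Summable.of_nonneg_of_le (fun n => hη0 _)
        (fun n => ?_) (hsumshift.mul_left (2 / -l))
      have hV2 := hN (n + N) (Nat.le_add_left N n)
      have hηnn := hη0 (n + N)
      rw [div_mul_eq_mul_div, le_div_iff₀ hLpos]
      nlinarith
    have hsumη' : Summable η := (summable_nat_add_iff N).1 hsumη
    exact not_tendsto_atTop_of_tendsto_nhds hsumη'.hasSum.tendsto_sum_nat hηdiv
  · rw [← hLeq] at hVlim
    exact hVlim
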